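/- Let m ≥ 1, λ₂ > 2, 0 < β ≤ m(λ₂-2)/2, and let J ⊂ ℝᵐ be a cube with side length l_J. Then for all x₂, z₂ ∈ ℝᵐ with z₂ ∈ J and |x₂ - z₂| ≥ 4√m l_J, ∫_0^{2l_J} ∫_{ℝᵐ} ∫_J (t₂/(t₂ + |x₂ - y₂|))^{mλ₂} · t₂^{2β}/(t₂ + |y₂ - z₂'|)^{2m+2β} dz₂' (dy₂ dt₂)/t₂^{m+1} ≤ C l_J^{m+2β} |x₂ - z₂|^{-2m-2β}, where C depends only on m, λ₂, β. -/

import Mathlib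

open MeasureTheory Real Set

noncomputable section

/-- The axis-parallel cube in `ℝᵐ` with center `z` and side length `l`. -/
def cube {m : ℕ} (z : EuclideanSpace ℝ (Fin m)) (l : ℝ) : Set (EuclideanSpace ℝ (Fin m)) :=
  {y | ∀ i, |y i - z i| ≤ l / 2}

namespace Stmt4Aux

/-- Integrability of the basic kernel. -/
theorem kernel_integrable (m : ℕ) (t r : ℝ) (ht : 0 < t) (hr : (m : ℝ) < r) :
    Integrable (fun u : EuclideanSpace ℝ (Fin m) => (t + ‖u‖) ^ (-r)) := by
  have h1 : Integrable (fun u : EuclideanSpace ℝ (Fin m) => (1 + ‖u‖) ^ (-r)) := by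
    apply integrable_one_add_norm
    rwa [finrank_euclideanSpace_fin]
  have h2 : Integrable (fun v : EuclideanSpace ℝ (Fin m) => (t + ‖t • v‖) ^ (-r)) := by
    have heq : (fun v : EuclideanSpace ℝ (Fin m) => (t + ‖t • v‖) ^ (-r))
        = fun v : EuclideanSpace ℝ (Fin m) => t ^ (-r) * (1 + ‖v‖) ^ (-r) := by
      funext v
      rw [norm_smul, Real.norm_eq_abs, abs_of_pos ht, ← mul_one_add,
        Real.mul_rpow ht.le (by positivity)]
    rw [heq]
    exact h1.const_mul _
  exact (integrable_comp_smul_iff volume _ (ne_of_gt ht)).1 h2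

/-- Scaling identity for the basic kernel. -/
theorem kernel_integral (m : ℕ) (t r : ℝ) (ht : 0 < t) :
    (∫ u : EuclideanSpace ℝ (Fin m), (t + ‖u‖) ^ (-r))
      = t ^ ((m : ℝ) - r) * ∫ u : EuclideanSpace ℝ (Fin m), (1 + ‖u‖) ^ (-r) := by
  have key := MeasureTheory.Measure.integral_comp_smul
    (μ := (volume : Measure (EuclideanSpace ℝ (Fin m))))
    (fun u : EuclideanSpace ℝ (Fin m) => (t + ‖u‖) ^ (-r)) t
  have h2 : (fun v : EuclideanSpace ℝ (Fin m) => (t + ‖t • v‖) ^ (-r))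
      = fun v : EuclideanSpace ℝ (Fin m) => t ^ (-r) * (1 + ‖v‖) ^ (-r) := by
    funext v
    rw [norm_smul, Real.norm_eq_abs, abs_of_pos ht, ← mul_one_add,
      Real.mul_rpow ht.le (by positivity)]
  rw [h2, finrank_euclideanSpace_fin, integral_const_mul] at key
  have hpow : |((t ^ m)⁻¹ : ℝ)| = t ^ (-(m : ℝ)) := by
    rw [abs_inv, abs_of_pos (pow_pos ht m), ← Real.rpow_natCast t m, ← Real.rpow_neg ht.le]
  rw [hpow, smul_eq_mul] at key
  have h3 : (∫ u : EuclideanSpace ℝ (Fin m), (t + ‖u‖) ^ (-r))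
      = t ^ ((m : ℝ)) * (t ^ (-(m : ℝ)) * ∫ u : EuclideanSpace ℝ (Fin m), (t + ‖u‖) ^ (-r)) := by
    rw [← mul_assoc, ← Real.rpow_add ht]
    simp
  rw [h3, ← key, ← mul_assoc, ← Real.rpow_add ht, ← sub_eq_add_neg]

theorem kernel_integrable_sub (m : ℕ) (t r : ℝ) (ht : 0 < t) (hr : (m : ℝ) < r)
    (w : EuclideanSpace ℝ (Fin m)) :
    Integrable (fun y : EuclideanSpace ℝ (Fin m) => (t + ‖y - w‖) ^ (-r)) :=
  (kernel_integrable m t r ht hr).comp_sub_right w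

theorem kernel_integral_sub (m : ℕ) (t r : ℝ) (ht : 0 < t)
    (w : EuclideanSpace ℝ (Fin m)) :
    (∫ y : EuclideanSpace ℝ (Fin m), (t + ‖y - w‖) ^ (-r))
      = t ^ ((m : ℝ) - r) * ∫ u : EuclideanSpace ℝ (Fin m), (1 + ‖u‖) ^ (-r) := by
  rw [MeasureTheory.integral_sub_right_eq_self
    (fun u : EuclideanSpace ℝ (Fin m) => (t + ‖u‖) ^ (-r)) w]
  exact kernel_integral m t r ht

theorem kernel_integrable_sub' (m : ℕ) (t r : ℝ) (ht : 0 < t) (hr : (m : ℝ) < r)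
    (w : EuclideanSpace ℝ (Fin m)) :
    Integrable (fun y : EuclideanSpace ℝ (Fin m) => (t + ‖w - y‖) ^ (-r)) := by
  have h : (fun y : EuclideanSpace ℝ (Fin m) => (t + ‖w - y‖) ^ (-r))
      = fun y : EuclideanSpace ℝ (Fin m) => (t + ‖y - w‖) ^ (-r) := by
    funext y; rw [norm_sub_rev]
  rw [h]; exact kernel_integrable_sub m t r ht hr w

theorem kernel_integral_sub' (m : ℕ) (t r : ℝ) (ht : 0 < t)
    (w : EuclideanSpace ℝ (Fin m)) :
    (∫ y : EuclideanSpace ℝ (Fin m), (t + ‖w - y‖) ^ (-r))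
      = t ^ ((m : ℝ) - r) * ∫ u : EuclideanSpace ℝ (Fin m), (1 + ‖u‖) ^ (-r) := by
  have h : (fun y : EuclideanSpace ℝ (Fin m) => (t + ‖w - y‖) ^ (-r))
      = fun y : EuclideanSpace ℝ (Fin m) => (t + ‖y - w‖) ^ (-r) := by
    funext y; rw [norm_sub_rev]
  rw [h]; exact kernel_integral_sub m t r ht w

/-- Diameter bound for the cube. -/
theorem cube_norm_sub_le {m : ℕ} (zJ : EuclideanSpace ℝ (Fin m)) {lJ : ℝ} (hl : 0 ≤ lJ)
    {a b : EuclideanSpace ℝ (Fin m)} (ha : a ∈ cube zJ lJ) (hb : b ∈ cube zJ lJ) :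
    ‖a - b‖ ≤ Real.sqrt m * lJ := by
  have hcoord : ∀ i, |a i - b i| ≤ lJ := fun i => by
    have h1 := ha i; have h2 := hb i
    have h : a i - b i = (a i - zJ i) - (b i - zJ i) := by ring
    rw [h]
    calc |(a i - zJ i) - (b i - zJ i)| ≤ |a i - zJ i| + |b i - zJ i| := abs_sub _ _
      _ ≤ lJ / 2 + lJ / 2 := add_le_add h1 h2
      _ = lJ := by ring
  have hnorm : ‖a - b‖ = Real.sqrt (∑ i, ‖(a - b) i‖ ^ 2) := EuclideanSpace.norm_eq _
  rw [hnorm]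
  have hsq : ∀ i : Fin m, ‖(a - b) i‖ ^ 2 ≤ lJ ^ 2 := fun i => by
    have h : (a - b) i = a i - b i := rfl
    rw [h, Real.norm_eq_abs, sq_abs]
    exact sq_le_sq' (by linarith [abs_le.mp (hcoord i)]) (abs_le.mp (hcoord i)).2
  calc Real.sqrt (∑ i, ‖(a - b) i‖ ^ 2) ≤ Real.sqrt (∑ _i : Fin m, lJ ^ 2) :=
        Real.sqrt_le_sqrt (Finset.sum_le_sum fun i _ => hsq i)
    _ = Real.sqrt ((m : ℝ) * lJ ^ 2) := by rw [Finset.sum_const, Finset.card_univ,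
        Fintype.card_fin, nsmul_eq_mul]
    _ = Real.sqrt m * lJ := by
        rw [Real.sqrt_mul (Nat.cast_nonneg m), Real.sqrt_sq hl]

theorem cube_isClosed {m : ℕ} (zJ : EuclideanSpace ℝ (Fin m)) (lJ : ℝ) :
    IsClosed (cube zJ lJ) := by
  have h : cube zJ lJ = ⋂ i, {y : EuclideanSpace ℝ (Fin m) | |y i - zJ i| ≤ lJ / 2} := by
    ext y; simp [cube, Set.mem_iInter]
  rw [h]
  refine isClosed_iInter fun i => ?_
  have hc : Continuous fun y : EuclideanSpace ℝ (Fin m) => |y i - zJ i| := by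
    have h2 : Continuous fun y : EuclideanSpace ℝ (Fin m) => y i :=
      (continuous_apply i).comp (PiLp.continuous_ofLp 2 fun _ : Fin m => ℝ)
    exact (h2.sub continuous_const).abs
  exact isClosed_le hc continuous_const

end Stmt4Aux

theorem stmt4 (m : ℕ) (hm : 1 ≤ m) (lam₂ β : ℝ) (hlam : 2 < lam₂) (hβ : 0 < β)
    (hβm : β ≤ (m : ℝ) * (lam₂ - 2) / 2) :
    ∃ C > 0, ∀ (lJ : ℝ), 0 < lJ → ∀ zJ x₂ z₂ : EuclideanSpace ℝ (Fin m),
      z₂ ∈ cube zJ lJ → 4 * Real.sqrt m * lJ ≤ ‖x₂ - z₂‖ →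
      (∫ t₂ in Ioo 0 (2 * lJ), ∫ y₂ : EuclideanSpace ℝ (Fin m),
          (∫ z₂' in cube zJ lJ,
            (t₂ / (t₂ + ‖x₂ - y₂‖)) ^ ((m : ℝ) * lam₂) *
              (t₂ ^ (2 * β) / (t₂ + ‖y₂ - z₂'‖) ^ (2 * (m : ℝ) + 2 * β))) /
            t₂ ^ ((m : ℝ) + 1)) ≤
        C * lJ ^ ((m : ℝ) + 2 * β) * ‖x₂ - z₂‖ ^ (-(2 * (m : ℝ)) - 2 * β) := by
  have hm' : (0:ℝ) < m := by exact_mod_cast Nat.pos_of_ne_zero (by omega)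
  set p : ℝ := 2 * (m:ℝ) + 2 * β with hpdef
  set q : ℝ := (m:ℝ) * lam₂ with hqdef
  have hmp : (m:ℝ) < p := by rw [hpdef]; nlinarith
  have hp0 : (0:ℝ) < p := lt_trans hm' hmp
  have hmq : (m:ℝ) < q := by rw [hqdef]; nlinarith
  have hq0 : (0:ℝ) < q := lt_trans hm' hmq
  have hpq : p ≤ q := by rw [hpdef, hqdef]; nlinarith
  set I₁ : ℝ := ∫ u : EuclideanSpace ℝ (Fin m), (1 + ‖u‖) ^ (-p) with hI₁def
  set I₂ : ℝ := ∫ u : EuclideanSpace ℝ (Fin m), (1 + ‖u‖) ^ (-q) with hI₂def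
  have hI₁0 : 0 ≤ I₁ := integral_nonneg fun u => Real.rpow_nonneg (by positivity) _
  have hI₂0 : 0 ≤ I₂ := integral_nonneg fun u => Real.rpow_nonneg (by positivity) _
  set V : ℝ := (volume (Metric.ball (0 : EuclideanSpace ℝ (Fin m)) 1)).toReal with hVdef
  have hV0 : 0 ≤ V := ENNReal.toReal_nonneg
  set C₀ : ℝ := (3/8 : ℝ) ^ (-p) * ((Real.sqrt m) ^ m * V) * (I₁ + I₂)
    * ((2:ℝ) ^ (2*β) / (2*β)) with hC₀def
  refine ⟨max 1 C₀, lt_of_lt_of_le one_pos (le_max_left _ _), fun lJ hlJ zJ x₂ z₂ hz hx => ?_⟩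
  have hsm1 : (1:ℝ) ≤ Real.sqrt m := by
    rw [show (1:ℝ) = Real.sqrt 1 by simp]
    exact Real.sqrt_le_sqrt (by exact_mod_cast hm)
  set R : ℝ := ‖x₂ - z₂‖ with hRdef
  have hR : 0 < R := lt_of_lt_of_le (by nlinarith) hx
  set K : ℝ := 3/8 * R with hKdef
  have hK : 0 < K := by rw [hKdef]; positivity
  set J := cube zJ lJ with hJdef
  have hJclosed : IsClosed J := Stmt4Aux.cube_isClosed zJ lJ
  have hJmeas : MeasurableSet J := hJclosed.measurableSet
  have hzJ : zJ ∈ J := fun i => by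
    simp only [sub_self, abs_zero]
    positivity
  have hJsub : J ⊆ Metric.closedBall zJ (Real.sqrt m * lJ) := fun a haJ => by
    rw [Metric.mem_closedBall, dist_eq_norm]
    exact Stmt4Aux.cube_norm_sub_le zJ hlJ.le haJ hzJ
  have hvol_ball : volume (Metric.closedBall zJ (Real.sqrt m * lJ))
      = ENNReal.ofReal ((Real.sqrt m * lJ) ^ m)
        * volume (Metric.ball (0 : EuclideanSpace ℝ (Fin m)) 1) := by
    have h := Measure.addHaar_closedBall (volume : Measure (EuclideanSpace ℝ (Fin m))) zJ
      (r := Real.sqrt m * lJ) (by positivity)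
    rwa [finrank_euclideanSpace_fin] at h
  have hball_fin : volume (Metric.closedBall zJ (Real.sqrt m * lJ)) < ⊤ :=
    measure_closedBall_lt_top
  have hvol_lt : volume J < ⊤ := lt_of_le_of_lt (measure_mono hJsub) hball_fin
  set VolR : ℝ := (volume J).toReal with hVolRdef
  have hVolR0 : 0 ≤ VolR := ENNReal.toReal_nonneg
  have hVolR_le : VolR ≤ (Real.sqrt m) ^ m * lJ ^ m * V := by
    have h1 : VolR ≤ (volume (Metric.closedBall zJ (Real.sqrt m * lJ))).toReal :=
      ENNReal.toReal_mono hball_fin.ne (measure_mono hJsub)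
    calc VolR ≤ (volume (Metric.closedBall zJ (Real.sqrt m * lJ))).toReal := h1
      _ = (Real.sqrt m * lJ) ^ m * V := by
          rw [hvol_ball, ENNReal.toReal_mul, ENNReal.toReal_ofReal (by positivity), hVdef]
      _ = (Real.sqrt m) ^ m * lJ ^ m * V := by rw [mul_pow]
  -- the geometric alternative
  have hgeo : ∀ z' ∈ J, ∀ y : EuclideanSpace ℝ (Fin m), ∀ t : ℝ, 0 < t →
      K ≤ t + ‖x₂ - y‖ ∨ K ≤ t + ‖y - z'‖ := by
    intro z' hz' y t ht
    by_contra hcon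
    push_neg at hcon
    obtain ⟨h1, h2⟩ := hcon
    have hzz' : ‖z₂ - z'‖ ≤ Real.sqrt m * lJ := Stmt4Aux.cube_norm_sub_le zJ hlJ.le hz hz'
    have htri1 : ‖x₂ - z'‖ ≤ ‖x₂ - y‖ + ‖y - z'‖ := by
      have h : x₂ - z' = (x₂ - y) + (y - z') := by abel
      rw [h]; exact norm_add_le _ _
    have htri2 : R ≤ ‖x₂ - z'‖ + ‖z₂ - z'‖ := by
      have h : x₂ - z₂ = (x₂ - z') + (z' - z₂) := by abel
      calc R = ‖(x₂ - z') + (z' - z₂)‖ := by rw [hRdef, h]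
        _ ≤ ‖x₂ - z'‖ + ‖z' - z₂‖ := norm_add_le _ _
        _ = ‖x₂ - z'‖ + ‖z₂ - z'‖ := by rw [norm_sub_rev z' z₂]
    have h4 : 4 * (Real.sqrt m * lJ) ≤ R := by
      calc 4 * (Real.sqrt m * lJ) = 4 * Real.sqrt m * lJ := by ring
        _ ≤ R := hx
    rw [hKdef] at h1 h2
    linarith
  -- main pointwise-in-t estimate
  set D : ℝ := K ^ (-p) * VolR * (I₁ + I₂) with hDdef
  have hD0 : 0 ≤ D := by
    rw [hDdef]
    exact mul_nonneg (mul_nonneg (Real.rpow_nonneg hK.le _) hVolR0) (by linarith)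
  have key_t : ∀ t ∈ Ioo (0:ℝ) (2 * lJ),
      (∫ y : EuclideanSpace ℝ (Fin m), (∫ z' in J,
        (t / (t + ‖x₂ - y‖)) ^ q * (t ^ (2*β) / (t + ‖y - z'‖) ^ p)) / t ^ ((m:ℝ)+1))
      ≤ t ^ (2*β - 1) * D := by
    rintro t ⟨ht0, _⟩
    have hd1 : ∀ y : EuclideanSpace ℝ (Fin m), 0 < t + ‖x₂ - y‖ := fun y =>
      lt_of_lt_of_le ht0 (le_add_of_nonneg_right (norm_nonneg _))
    have hd2 : ∀ y z' : EuclideanSpace ℝ (Fin m), 0 < t + ‖y - z'‖ := fun y z' =>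
      lt_of_lt_of_le ht0 (le_add_of_nonneg_right (norm_nonneg _))
    have ht2β : (0:ℝ) ≤ t ^ (2*β) := Real.rpow_nonneg ht0.le _
    have hA0 : ∀ y : EuclideanSpace ℝ (Fin m), 0 ≤ (t / (t + ‖x₂ - y‖)) ^ q := fun y =>
      Real.rpow_nonneg (div_nonneg ht0.le (hd1 y).le) _
    have hF0 : ∀ y z' : EuclideanSpace ℝ (Fin m),
        0 ≤ (t / (t + ‖x₂ - y‖)) ^ q * (t ^ (2*β) / (t + ‖y - z'‖) ^ p) := fun y z' =>
      mul_nonneg (hA0 y) (div_nonneg ht2β (Real.rpow_nonneg (hd2 y z').le _))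
    -- pointwise bound
    have hpt : ∀ y : EuclideanSpace ℝ (Fin m), ∀ z' ∈ J,
        (t / (t + ‖x₂ - y‖)) ^ q * (t ^ (2*β) / (t + ‖y - z'‖) ^ p)
        ≤ ((t / K) ^ p * t ^ (2*β)) * (t + ‖y - z'‖) ^ (-p)
          + (t / (t + ‖x₂ - y‖)) ^ q * (t ^ (2*β) * K ^ (-p)) := by
      intro y z' hz'
      have hB : t ^ (2*β) / (t + ‖y - z'‖) ^ p = t ^ (2*β) * (t + ‖y - z'‖) ^ (-p) := by
        rw [Real.rpow_neg (hd2 y z').le, div_eq_mul_inv]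
      have hk0 : (0:ℝ) ≤ (t + ‖y - z'‖) ^ (-p) := Real.rpow_nonneg (hd2 y z').le _
      rcases hgeo z' hz' y t ht0 with hcase | hcase
      · have hbase0 : 0 < t / (t + ‖x₂ - y‖) := div_pos ht0 (hd1 y)
        have hbase1 : t / (t + ‖x₂ - y‖) ≤ 1 :=
          div_le_one_of_le₀ (le_add_of_nonneg_right (norm_nonneg _)) (hd1 y).le
        have e1 : (t / (t + ‖x₂ - y‖)) ^ q ≤ (t / (t + ‖x₂ - y‖)) ^ p :=
          Real.rpow_le_rpow_of_exponent_ge hbase0 hbase1 hpq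
        have e2 : (t / (t + ‖x₂ - y‖)) ^ p ≤ (t / K) ^ p := by
          apply Real.rpow_le_rpow hbase0.le _ hp0.le
          gcongr
        calc (t / (t + ‖x₂ - y‖)) ^ q * (t ^ (2*β) / (t + ‖y - z'‖) ^ p)
            = (t / (t + ‖x₂ - y‖)) ^ q * (t ^ (2*β) * (t + ‖y - z'‖) ^ (-p)) := by rw [hB]
          _ ≤ (t / K) ^ p * (t ^ (2*β) * (t + ‖y - z'‖) ^ (-p)) :=
              mul_le_mul_of_nonneg_right (e1.trans e2) (mul_nonneg ht2β hk0)
          _ = ((t / K) ^ p * t ^ (2*β)) * (t + ‖y - z'‖) ^ (-p) := by ring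
          _ ≤ _ := le_add_of_nonneg_right (mul_nonneg (hA0 y)
              (mul_nonneg ht2β (Real.rpow_nonneg hK.le _)))
      · have e3 : t ^ (2*β) / (t + ‖y - z'‖) ^ p ≤ t ^ (2*β) * K ^ (-p) := by
          have hKp : K ^ p ≤ (t + ‖y - z'‖) ^ p := Real.rpow_le_rpow hK.le hcase hp0.le
          calc t ^ (2*β) / (t + ‖y - z'‖) ^ p ≤ t ^ (2*β) / K ^ p := by
                gcongr
            _ = t ^ (2*β) * K ^ (-p) := by rw [Real.rpow_neg hK.le, div_eq_mul_inv]
        calc (t / (t + ‖x₂ - y‖)) ^ q * (t ^ (2*β) / (t + ‖y - z'‖) ^ p)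
            ≤ (t / (t + ‖x₂ - y‖)) ^ q * (t ^ (2*β) * K ^ (-p)) :=
              mul_le_mul_of_nonneg_left e3 (hA0 y)
          _ ≤ _ := le_add_of_nonneg_left (mul_nonneg
              (mul_nonneg (Real.rpow_nonneg (div_nonneg ht0.le hK.le) _) ht2β)
              (Real.rpow_nonneg (hd2 y z').le _))
    -- integrability on J
    have hJcompact : IsCompact J := Metric.isCompact_of_isClosed_isBounded hJclosed
      (Metric.isBounded_closedBall.subset hJsub)
    have hkcont : ∀ y : EuclideanSpace ℝ (Fin m),
        Continuous fun z' : EuclideanSpace ℝ (Fin m) => (t + ‖y - z'‖) ^ (-p) := by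
      intro y
      have h1 : Continuous fun z' : EuclideanSpace ℝ (Fin m) => t + ‖y - z'‖ :=
        continuous_const.add ((continuous_const.sub continuous_id).norm)
      exact h1.rpow_const fun z' => Or.inl (ne_of_gt (hd2 y z'))
    have hk_intJ : ∀ y, IntegrableOn
        (fun z' : EuclideanSpace ℝ (Fin m) => (t + ‖y - z'‖) ^ (-p)) J volume := fun y =>
      ((hkcont y).continuousOn).integrableOn_compact hJcompact
    -- z'-integral bound
    have hS_le : ∀ y : EuclideanSpace ℝ (Fin m),
        (∫ z' in J, (t / (t + ‖x₂ - y‖)) ^ q * (t ^ (2*β) / (t + ‖y - z'‖) ^ p))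
        ≤ ((t / K) ^ p * t ^ (2*β)) * (∫ z' in J, (t + ‖y - z'‖) ^ (-p))
          + (t / (t + ‖x₂ - y‖)) ^ q * (t ^ (2*β) * K ^ (-p)) * VolR := by
      intro y
      have hint1 : IntegrableOn (fun z' : EuclideanSpace ℝ (Fin m) =>
          ((t / K) ^ p * t ^ (2*β)) * (t + ‖y - z'‖) ^ (-p)) J volume :=
        (hk_intJ y).const_mul _
      have hint2 : IntegrableOn (fun _ : EuclideanSpace ℝ (Fin m) =>
          (t / (t + ‖x₂ - y‖)) ^ q * (t ^ (2*β) * K ^ (-p))) J volume :=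
        integrableOn_const hvol_lt.ne enorm_ne_top
      have hint12 : IntegrableOn (fun z' : EuclideanSpace ℝ (Fin m) =>
          ((t / K) ^ p * t ^ (2*β)) * (t + ‖y - z'‖) ^ (-p)
          + (t / (t + ‖x₂ - y‖)) ^ q * (t ^ (2*β) * K ^ (-p))) J volume := hint1.add hint2
      have step := integral_mono_of_nonneg (μ := volume.restrict J)
        (Filter.Eventually.of_forall fun z' => hF0 y z')
        hint12
        ((ae_restrict_iff' hJmeas).2 (Filter.Eventually.of_forall fun z' hz' => hpt y z' hz'))
      refine step.trans_eq ?_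
      rw [integral_add hint1 hint2, integral_const_mul, setIntegral_const, smul_eq_mul,
        measureReal_def, ← hVolRdef]
      ring
    -- integrability and value for the first factor
    have hArw : (fun y : EuclideanSpace ℝ (Fin m) => (t / (t + ‖x₂ - y‖)) ^ q)
        = fun y : EuclideanSpace ℝ (Fin m) => t ^ q * (t + ‖x₂ - y‖) ^ (-q) := by
      funext y
      rw [Real.div_rpow ht0.le (hd1 y).le, Real.rpow_neg (hd1 y).le, div_eq_mul_inv]
    have hA_int : Integrable (fun y : EuclideanSpace ℝ (Fin m) => (t / (t + ‖x₂ - y‖)) ^ q) := by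
      rw [hArw]
      exact (Stmt4Aux.kernel_integrable_sub' m t q ht0 hmq x₂).const_mul _
    have hA_val : (∫ y : EuclideanSpace ℝ (Fin m), (t / (t + ‖x₂ - y‖)) ^ q)
        = t ^ q * (t ^ ((m:ℝ) - q) * I₂) := by
      rw [hArw, integral_const_mul, Stmt4Aux.kernel_integral_sub' m t q ht0 x₂, hI₂def]
    -- Fubini for the second kernel
    have hcontprod : Continuous fun zy : EuclideanSpace ℝ (Fin m) × EuclideanSpace ℝ (Fin m) =>
        (t + ‖zy.2 - zy.1‖) ^ (-p) := by
      have h1 : Continuous fun zy : EuclideanSpace ℝ (Fin m) × EuclideanSpace ℝ (Fin m) =>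
          t + ‖zy.2 - zy.1‖ := continuous_const.add ((continuous_snd.sub continuous_fst).norm)
      exact h1.rpow_const fun zy => Or.inl (ne_of_gt (hd2 _ _))
    have hprod : Integrable (fun zy : EuclideanSpace ℝ (Fin m) × EuclideanSpace ℝ (Fin m) =>
        (t + ‖zy.2 - zy.1‖) ^ (-p)) ((volume.restrict J).prod volume) := by
      rw [MeasureTheory.integrable_prod_iff hcontprod.aestronglyMeasurable]
      constructor
      · exact Filter.Eventually.of_forall fun z' =>
          Stmt4Aux.kernel_integrable_sub m t p ht0 hmp z'
      · have heq : (fun z' : EuclideanSpace ℝ (Fin m) =>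
            ∫ y : EuclideanSpace ℝ (Fin m), ‖(t + ‖y - z'‖) ^ (-p)‖)
            = fun _ => t ^ ((m:ℝ) - p) * I₁ := by
          funext z'
          have hn : ∀ y : EuclideanSpace ℝ (Fin m),
              ‖(t + ‖y - z'‖) ^ (-p)‖ = (t + ‖y - z'‖) ^ (-p) := fun y =>
            Real.norm_of_nonneg (Real.rpow_nonneg (hd2 y z').le _)
          simp only [hn]
          rw [Stmt4Aux.kernel_integral_sub m t p ht0 z', hI₁def]
        rw [heq]
        exact integrableOn_const hvol_lt.ne enorm_ne_top
    have hswap : Integrable (fun yz : EuclideanSpace ℝ (Fin m) × EuclideanSpace ℝ (Fin m) =>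
        (t + ‖yz.1 - yz.2‖) ^ (-p)) (volume.prod (volume.restrict J)) := hprod.swap
    have hg1_int : Integrable (fun y : EuclideanSpace ℝ (Fin m) =>
        ∫ z' in J, (t + ‖y - z'‖) ^ (-p)) volume := hswap.integral_prod_left
    have hg1_val : (∫ y : EuclideanSpace ℝ (Fin m), ∫ z' in J, (t + ‖y - z'‖) ^ (-p))
        = VolR * (t ^ ((m:ℝ) - p) * I₁) := by
      rw [MeasureTheory.integral_integral_swap (f := fun (y z' : EuclideanSpace ℝ (Fin m)) =>
        (t + ‖y - z'‖) ^ (-p)) hswap]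
      have heq : (fun z' : EuclideanSpace ℝ (Fin m) =>
          ∫ y : EuclideanSpace ℝ (Fin m), (t + ‖y - z'‖) ^ (-p))
          = fun _ => t ^ ((m:ℝ) - p) * I₁ := by
        funext z'
        rw [Stmt4Aux.kernel_integral_sub m t p ht0 z', hI₁def]
      rw [heq, setIntegral_const, smul_eq_mul, measureReal_def, ← hVolRdef]
    -- middle estimate
    have hmid : (∫ y : EuclideanSpace ℝ (Fin m), ∫ z' in J,
        (t / (t + ‖x₂ - y‖)) ^ q * (t ^ (2*β) / (t + ‖y - z'‖) ^ p))
        ≤ t ^ ((m:ℝ) + 2*β) * K ^ (-p) * VolR * (I₁ + I₂) := by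
      have hbound_int : Integrable (fun y : EuclideanSpace ℝ (Fin m) =>
          ((t / K) ^ p * t ^ (2*β)) * (∫ z' in J, (t + ‖y - z'‖) ^ (-p))
          + (t / (t + ‖x₂ - y‖)) ^ q * (t ^ (2*β) * K ^ (-p)) * VolR) := by
        exact (hg1_int.const_mul _).add ((hA_int.mul_const _).mul_const _)
      have step := integral_mono_of_nonneg
        (Filter.Eventually.of_forall fun y => integral_nonneg fun z' => hF0 y z')
        hbound_int
        (Filter.Eventually.of_forall hS_le)
      refine step.trans_eq ?_
      rw [integral_add (hg1_int.const_mul _) ((hA_int.mul_const _).mul_const _),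
        integral_const_mul, integral_mul_const, integral_mul_const, hg1_val, hA_val]
      have hdivK : (t / K) ^ p = t ^ p * K ^ (-p) := by
        rw [Real.div_rpow ht0.le hK.le, Real.rpow_neg hK.le, div_eq_mul_inv]
      have e1 : t ^ p * t ^ (2*β) * t ^ ((m:ℝ) - p) = t ^ ((m:ℝ) + 2*β) := by
        rw [← Real.rpow_add ht0, ← Real.rpow_add ht0]; congr 1; ring
      have e2 : t ^ q * t ^ ((m:ℝ) - q) * t ^ (2*β) = t ^ ((m:ℝ) + 2*β) := by
        rw [← Real.rpow_add ht0, ← Real.rpow_add ht0]; congr 1; ring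
      rw [hdivK]
      linear_combination (K ^ (-p) * VolR * I₁) * e1 + (K ^ (-p) * VolR * I₂) * e2
    -- divide by t^(m+1)
    have hpos' : 0 < t ^ ((m:ℝ)+1) := Real.rpow_pos_of_pos ht0 _
    rw [integral_div]
    have e3 : t ^ ((m:ℝ) + 2*β) * K ^ (-p) * VolR * (I₁ + I₂) / t ^ ((m:ℝ)+1)
        = t ^ (2*β - 1) * D := by
      rw [hDdef, div_eq_iff (ne_of_gt hpos')]
      have e4 : t ^ (2*β-1) * t ^ ((m:ℝ)+1) = t ^ ((m:ℝ) + 2*β) := by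
        rw [← Real.rpow_add ht0]; congr 1; ring
      linear_combination (-(K ^ (-p) * VolR * (I₁ + I₂))) * e4
    rw [← e3]
    exact div_le_div_of_nonneg_right hmid hpos'.le
  -- outer integral
  have hmaj_int : IntegrableOn (fun t : ℝ => t ^ (2*β-1) * D) (Ioo 0 (2*lJ)) volume := by
    apply Integrable.mul_const
    have h := (intervalIntegral.intervalIntegrable_rpow' (a := 0) (b := 2*lJ)
      (by linarith : (-1:ℝ) < 2*β - 1))
    exact h.1.mono_set Ioo_subset_Ioc_self
  have houter_le : (∫ t in Ioo (0:ℝ) (2*lJ), ∫ y : EuclideanSpace ℝ (Fin m), (∫ z' in J,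
      (t / (t + ‖x₂ - y‖)) ^ q * (t ^ (2*β) / (t + ‖y - z'‖) ^ p)) / t ^ ((m:ℝ)+1))
      ≤ ∫ t in Ioo (0:ℝ) (2*lJ), t ^ (2*β-1) * D := by
    refine integral_mono_of_nonneg ?_ hmaj_int ?_
    · refine (ae_restrict_iff' measurableSet_Ioo).2 (Filter.Eventually.of_forall
        fun t ht => ?_)
      refine integral_nonneg fun y => div_nonneg (integral_nonneg fun z' => ?_)
        (Real.rpow_nonneg ht.1.le _)
      refine mul_nonneg (Real.rpow_nonneg (div_nonneg ht.1.le ?_) _)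
        (div_nonneg (Real.rpow_nonneg ht.1.le _) (Real.rpow_nonneg ?_ _))
      · exact add_nonneg ht.1.le (norm_nonneg _)
      · exact add_nonneg ht.1.le (norm_nonneg _)
    · exact (ae_restrict_iff' measurableSet_Ioo).2 (Filter.Eventually.of_forall key_t)
  have hval : (∫ t in Ioo (0:ℝ) (2*lJ), t ^ (2*β-1) * D) = (2*lJ) ^ (2*β) / (2*β) * D := by
    rw [integral_mul_const]
    congr 1
    rw [← MeasureTheory.integral_Ioc_eq_integral_Ioo,
      ← intervalIntegral.integral_of_le (by linarith : (0:ℝ) ≤ 2*lJ),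
      integral_rpow (Or.inl (by linarith : (-1:ℝ) < 2*β-1)),
      Real.zero_rpow (by linarith : 2*β-1+1 ≠ 0),
      show 2*β-1+1 = 2*β by ring]
    ring
  have hfinal : (2*lJ) ^ (2*β) / (2*β) * D ≤ C₀ * lJ ^ ((m:ℝ) + 2*β) * R ^ (-p) := by
    have h2l : (2*lJ) ^ (2*β) = 2 ^ (2*β) * lJ ^ (2*β) := Real.mul_rpow (by norm_num) hlJ.le
    have hKp : K ^ (-p) = (3/8:ℝ) ^ (-p) * R ^ (-p) := by
      rw [hKdef, Real.mul_rpow (by norm_num) hR.le]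
    have hlJpow : lJ ^ ((m:ℝ) + 2*β) = lJ ^ (m:ℕ) * lJ ^ (2*β) := by
      rw [← Real.rpow_natCast lJ m, ← Real.rpow_add hlJ]
    have hc : (0:ℝ) ≤ 2 ^ (2*β) * lJ ^ (2*β) / (2*β) * ((3/8:ℝ) ^ (-p) * R ^ (-p))
        * (I₁ + I₂) :=
      mul_nonneg (mul_nonneg (div_nonneg (mul_nonneg (Real.rpow_nonneg (by norm_num) _)
        (Real.rpow_nonneg hlJ.le _)) (by linarith))
        (mul_nonneg (Real.rpow_nonneg (by norm_num) _) (Real.rpow_nonneg hR.le _)))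
        (by linarith)
    have base := mul_le_mul_of_nonneg_left hVolR_le hc
    calc (2*lJ) ^ (2*β) / (2*β) * D
        = 2 ^ (2*β) * lJ ^ (2*β) / (2*β) * ((3/8:ℝ) ^ (-p) * R ^ (-p)) * (I₁ + I₂)
            * VolR := by rw [hDdef, hKp, h2l]; ring
      _ ≤ 2 ^ (2*β) * lJ ^ (2*β) / (2*β) * ((3/8:ℝ) ^ (-p) * R ^ (-p)) * (I₁ + I₂)
            * ((Real.sqrt m) ^ m * lJ ^ m * V) := base
      _ = C₀ * lJ ^ ((m:ℝ) + 2*β) * R ^ (-p) := by rw [hC₀def, hlJpow]; ring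
  have hxexp : -(2 * (m:ℝ)) - 2 * β = -p := by rw [hpdef]; ring
  rw [hxexp]
  calc (∫ t in Ioo (0:ℝ) (2*lJ), ∫ y : EuclideanSpace ℝ (Fin m), (∫ z' in J,
      (t / (t + ‖x₂ - y‖)) ^ q * (t ^ (2*β) / (t + ‖y - z'‖) ^ p)) / t ^ ((m:ℝ)+1))
      ≤ ∫ t in Ioo (0:ℝ) (2*lJ), t ^ (2*β-1) * D := houter_le
    _ = (2*lJ) ^ (2*β) / (2*β) * D := hval
    _ ≤ C₀ * lJ ^ ((m:ℝ) + 2*β) * R ^ (-p) := hfinal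
    _ ≤ max 1 C₀ * lJ ^ ((m:ℝ) + 2*β) * R ^ (-p) := by
        apply mul_le_mul_of_nonneg_right _ (Real.rpow_nonneg hR.le _)
        exact mul_le_mul_of_nonneg_right (le_max_right _ _) (Real.rpow_nonneg hlJ.le _)
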